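/- Let P : Fin 2 → Fin 5 → Fin 2 → Fin 5 be a layer-latin parallelepiped of size 2×5×2 chosen from a 2-layer latin cuboid of order 5, i.e.: for every layer l and column c the map r ↦ P l r c is a bijection of Fin 5; for every layer l and row r, P l r 0 ≠ P l r 1; and for every row r and column c, P 0 r c ≠ P 1 r c. Suppose the 2-cube of P on a pair of distinct rows {r₁, r₂} has no transversal. Then for every pair of distinct rows {r₃, r₄} with {r₃, r₄} ≠ {r₁, r₂} and {r₃, r₄} ∩ {r₁, r₂} ≠ ∅ (an adjacent 2-cube), the set of ranges of transversals of the 2-cube on {r₃, r₄} has at least 2 elements. -/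
import Mathlib


/-- The set of ranges of transversals of the 2-cube of a `2×5×2` layer-latin
parallelepiped `P` on the pair of rows `{r₁, r₂}`. -/
def ranges2 (P : Fin 2 → Fin 5 → Fin 2 → Fin 5) (r₁ r₂ : Fin 5) :
    Set (Finset (Fin 5)) :=
  { S | ∃ (ρ₀ ρ₁ : Fin 5) (c₀ c₁ : Fin 2),
      ρ₀ ∈ ({r₁, r₂} : Finset (Fin 5)) ∧ ρ₁ ∈ ({r₁, r₂} : Finset (Fin 5)) ∧
      ρ₀ ≠ ρ₁ ∧ c₀ ≠ c₁ ∧ P 0 ρ₀ c₀ ≠ P 1 ρ₁ c₁ ∧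
      S = {P 0 ρ₀ c₀, P 1 ρ₁ c₁} }

lemma ranges2_comm (P : Fin 2 → Fin 5 → Fin 2 → Fin 5) (x y : Fin 5) :
    ranges2 P x y = ranges2 P y x := by
  unfold ranges2
  rw [Finset.pair_comm x y]

lemma ranges2_key (P : Fin 2 → Fin 5 → Fin 2 → Fin 5)
    (hcol : ∀ (l : Fin 2) (c : Fin 2), Function.Bijective fun r => P l r c)
    (t t' s : Fin 5) (htt' : t' ≠ t) (hts : t ≠ s) (ht's : t' ≠ s)
    (e2 : P 1 t 1 = P 0 t' 0) (e4 : P 1 t' 1 = P 0 t 0) :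
    2 ≤ (ranges2 P t s).ncard := by
  have colne : ∀ (l c : Fin 2) (r r' : Fin 5), r ≠ r' → P l r c ≠ P l r' c :=
    fun l c r r' h he => h ((hcol l c).1 he)
  have h1 : ({P 0 t 0, P 1 s 1} : Finset (Fin 5)) ∈ ranges2 P t s := by
    refine ⟨t, s, 0, 1, by simp, by simp, hts, by decide, ?_, rfl⟩
    rw [← e4]; exact colne 1 1 t' s ht's
  have h2 : ({P 0 s 0, P 1 t 1} : Finset (Fin 5)) ∈ ranges2 P t s := by
    refine ⟨s, t, 0, 1, by simp, by simp, hts.symm, by decide, ?_, rfl⟩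
    rw [e2]; exact colne 0 0 s t' ht's.symm
  have hne : ({P 0 t 0, P 1 s 1} : Finset (Fin 5)) ≠ {P 0 s 0, P 1 t 1} := by
    intro h
    have hm : P 1 t 1 ∈ ({P 0 t 0, P 1 s 1} : Finset (Fin 5)) := by
      rw [h]; simp
    simp only [Finset.mem_insert, Finset.mem_singleton] at hm
    rcases hm with hm | hm
    · rw [e2] at hm; exact colne 0 0 t' t htt' hm
    · exact colne 1 1 t s hts hm
  have : 1 < (ranges2 P t s).ncard := by
    rw [Set.one_lt_ncard_iff (Set.toFinite _)]
    exact ⟨_, _, h1, h2, hne.symm ∘ Eq.symm⟩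
  exact this

/-- If a 2-cube of a `2×5×2` layer-latin parallelepiped has no transversal, then every
adjacent 2-cube has transversals of at least 2 different ranges. -/
theorem adjacent_two_cube_ranges_of_no_transversal
    (P : Fin 2 → Fin 5 → Fin 2 → Fin 5)
    (hcol : ∀ (l : Fin 2) (c : Fin 2), Function.Bijective fun r => P l r c)
    (hrow : ∀ (l : Fin 2) (r : Fin 5), P l r 0 ≠ P l r 1)
    (hlayers : ∀ (r : Fin 5) (c : Fin 2), P 0 r c ≠ P 1 r c)
    (r₁ r₂ : Fin 5) (hr : r₁ ≠ r₂)
    (hnt : ranges2 P r₁ r₂ = ∅) :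
    ∀ r₃ r₄ : Fin 5, r₃ ≠ r₄ →
      ({r₃, r₄} : Finset (Fin 5)) ≠ {r₁, r₂} →
      ({r₃, r₄} : Finset (Fin 5)) ∩ {r₁, r₂} ≠ ∅ →
      2 ≤ (ranges2 P r₃ r₄).ncard := by
  have h1 : P 0 r₁ 0 = P 1 r₂ 1 := by
    by_contra h
    have : ({P 0 r₁ 0, P 1 r₂ 1} : Finset (Fin 5)) ∈ ranges2 P r₁ r₂ :=
      ⟨r₁, r₂, 0, 1, by simp, by simp, hr, by decide, h, rfl⟩
    rw [hnt] at this; exact this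
  have h3 : P 0 r₂ 0 = P 1 r₁ 1 := by
    by_contra h
    have : ({P 0 r₂ 0, P 1 r₁ 1} : Finset (Fin 5)) ∈ ranges2 P r₁ r₂ :=
      ⟨r₂, r₁, 0, 1, by simp, by simp, hr.symm, by decide, h, rfl⟩
    rw [hnt] at this; exact this
  intro r₃ r₄ h34 hset hint
  obtain ⟨x, hx⟩ := Finset.nonempty_iff_ne_empty.mpr hint
  simp only [Finset.mem_inter, Finset.mem_insert, Finset.mem_singleton] at hx
  rcases hx with ⟨hx3 | hx4, hx1 | hx2⟩
  · -- r₃ = r₁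
    obtain rfl : r₁ = r₃ := hx1.symm.trans hx3
    have h42 : r₄ ≠ r₂ := fun h => hset (by rw [h])
    exact ranges2_key P hcol r₁ r₂ r₄ hr.symm h34 h42.symm h3.symm h1.symm
  · -- r₃ = r₂
    obtain rfl : r₂ = r₃ := hx2.symm.trans hx3
    have h41 : r₄ ≠ r₁ := fun h => hset (by rw [h, Finset.pair_comm])
    exact ranges2_key P hcol r₂ r₁ r₄ hr h34 h41.symm h1.symm h3.symm
  · -- r₄ = r₁
    obtain rfl : r₁ = r₄ := hx1.symm.trans hx4
    have h32 : r₃ ≠ r₂ := fun h => hset (by rw [h, Finset.pair_comm])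
    rw [ranges2_comm]
    exact ranges2_key P hcol r₁ r₂ r₃ hr.symm (Ne.symm h34) h32.symm h3.symm h1.symm
  · -- r₄ = r₂
    obtain rfl : r₂ = r₄ := hx2.symm.trans hx4
    have h31 : r₃ ≠ r₁ := fun h => hset (by rw [h])
    rw [ranges2_comm]
    exact ranges2_key P hcol r₂ r₁ r₃ hr (Ne.symm h34) h31.symm h1.symm h3.symm
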